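/- Let U be a real M×l matrix and V a real N×l matrix, each with orthonormal columns. Then the matrices Vᵀ Aᵀ A V − (Uᵀ A V)ᵀ (Uᵀ A V) and Uᵀ A Aᵀ U − (Uᵀ A V)(Uᵀ A V)ᵀ are positive semidefinite; consequently, for every h ∈ ℝ^l, hᵀ (Vᵀ Aᵀ A V) h ≥ σ_min(Uᵀ A V)²·‖h‖² and hᵀ (Uᵀ A Aᵀ U) h ≥ σ_min(Uᵀ A V)²·‖h‖². -/

import Mathlib

open Matrix

noncomputable def euclNorm {ι : Type*} [Fintype ι] (v : ι → ℝ) : ℝ :=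
  Real.sqrt (∑ i, v i ^ 2)

def eLast (m : ℕ) : Fin m → ℝ := fun i => if (i : ℕ) = m - 1 then 1 else 0

def HarmonicPencil {m : ℕ} (B : Matrix (Fin m) (Fin m) ℝ) (β θ : ℝ)
    (s w : Fin m → ℝ) : Prop :=
  θ • B.mulVec w = (B * Bᵀ + β ^ 2 • vecMulVec (eLast m) (eLast m)).mulVec s ∧
  θ • Bᵀ.mulVec s = (Bᵀ * B).mulVec w

noncomputable def specNorm {m n : Type*} [Fintype m] [Fintype n] [DecidableEq n]
    (A : Matrix m n ℝ) : ℝ :=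
  ‖LinearMap.toContinuousLinearMap (Matrix.toEuclideanLin A)‖

noncomputable def sep {n : Type*} [Fintype n] [DecidableEq n] (a : ℝ) (G : Matrix n n ℝ) : ℝ :=
  sInf {r | ∃ x : n → ℝ, euclNorm x = 1 ∧ r = euclNorm ((a • (1 : Matrix n n ℝ) - G).mulVec x)}

noncomputable def sigmaMin {m n : Type*} [Fintype m] [Fintype n] (C : Matrix m n ℝ) : ℝ :=
  sSup {c | 0 ≤ c ∧ ∀ h, c * euclNorm h ≤ euclNorm (C.mulVec h)}

noncomputable def sinAngleVec {ι : Type*} [Fintype ι] (x y : ι → ℝ) : ℝ :=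
  Real.sqrt (1 - (x ⬝ᵥ y) ^ 2 / (euclNorm x ^ 2 * euclNorm y ^ 2))

noncomputable def toE {ι : Type*} (v : ι → ℝ) : EuclideanSpace ℝ ι :=
  (WithLp.equiv 2 (ι → ℝ)).symm v

noncomputable def ofE {ι : Type*} (v : EuclideanSpace ℝ ι) : ι → ℝ :=
  WithLp.equiv 2 (ι → ℝ) v

noncomputable def sinAngleSub {ι : Type*} [Fintype ι] (x : EuclideanSpace ℝ ι)
    (E : Submodule ℝ (EuclideanSpace ℝ ι)) : ℝ :=
  ‖x - (Submodule.orthogonalProjectionOnto E x : EuclideanSpace ℝ ι)‖ / ‖x‖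

def Atilde {M N : ℕ} (A : Matrix (Fin M) (Fin N) ℝ) :
    Matrix (Fin M ⊕ Fin N) (Fin M ⊕ Fin N) ℝ :=
  fromBlocks 0 A Aᵀ 0

def Btilde {m : ℕ} (B : Matrix (Fin m) (Fin m) ℝ) :
    Matrix (Fin m ⊕ Fin m) (Fin m ⊕ Fin m) ℝ :=
  fromBlocks 0 B Bᵀ 0

noncomputable def Ctilde {m : ℕ} (B : Matrix (Fin m) (Fin m) ℝ) (β : ℝ) :
    Matrix (Fin m ⊕ Fin m) (Fin m ⊕ Fin m) ℝ :=
  fromBlocks (B * Bᵀ + β ^ 2 • vecMulVec (eLast m) (eLast m)) 0 0 (Bᵀ * B)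

noncomputable def colSpanE {M N m : ℕ} (P : Matrix (Fin M) (Fin m) ℝ)
    (Q : Matrix (Fin N) (Fin m) ℝ) : Submodule ℝ (EuclideanSpace ℝ (Fin M ⊕ Fin N)) :=
  Submodule.span ℝ {z | ∃ x y : Fin m → ℝ, z = toE (Sum.elim (P.mulVec x) (Q.mulVec y))}

noncomputable def Mrho {m : ℕ} (B : Matrix (Fin m) (Fin m) ℝ) (β ρ : ℝ) :
    Matrix ((Fin m ⊕ Fin m) ⊕ Unit) (Fin m ⊕ Fin m) ℝ :=
  Matrix.fromRows
    (fromBlocks (-(ρ • (1 : Matrix (Fin m) (Fin m) ℝ))) B Bᵀ (-(ρ • 1)))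
    (Matrix.of fun (_ : Unit) j => Sum.elim (β • eLast m) (0 : Fin m → ℝ) j)


lemma euclNorm_nonneg' {ι : Type*} [Fintype ι] (v : ι → ℝ) : 0 ≤ euclNorm v := Real.sqrt_nonneg _

lemma euclNorm_sq' {ι : Type*} [Fintype ι] (v : ι → ℝ) : euclNorm v ^ 2 = v ⬝ᵥ v := by
  rw [euclNorm, Real.sq_sqrt (Finset.sum_nonneg fun i _ => sq_nonneg _)]
  simp [dotProduct, sq]

lemma euclNorm_eq_zero' {ι : Type*} [Fintype ι] {v : ι → ℝ} (h : euclNorm v = 0) : v = 0 := by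
  have : v ⬝ᵥ v = 0 := by rw [← euclNorm_sq', h]; ring
  exact dotProduct_self_eq_zero.mp this

lemma dot_CtC' {m n : Type*} [Fintype m] [Fintype n] (C : Matrix m n ℝ) (h : n → ℝ) :
    h ⬝ᵥ (Cᵀ * C).mulVec h = euclNorm (C.mulVec h) ^ 2 := by
  rw [euclNorm_sq', ← Matrix.mulVec_mulVec, Matrix.dotProduct_mulVec, Matrix.vecMul_transpose]

lemma abs_dot_le' {ι : Type*} [Fintype ι] (x y : ι → ℝ) : |x ⬝ᵥ y| ≤ euclNorm x * euclNorm y := by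
  have := abs_real_inner_le_norm ((WithLp.equiv 2 (ι → ℝ)).symm x) ((WithLp.equiv 2 (ι → ℝ)).symm y)
  simpa [PiLp.inner_apply, EuclideanSpace.norm_eq, euclNorm, dotProduct, Real.norm_eq_abs,
    sq_abs, mul_comm] using this

lemma zero_mem_S' {m n : Type*} [Fintype m] [Fintype n] (C : Matrix m n ℝ) :
    (0:ℝ) ∈ {c | 0 ≤ c ∧ ∀ h, c * euclNorm h ≤ euclNorm (C.mulVec h)} :=
  ⟨le_refl 0, fun h => by simpa using euclNorm_nonneg' (C.mulVec h)⟩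

lemma sigmaMin_nonneg' {m n : Type*} [Fintype m] [Fintype n] (C : Matrix m n ℝ) :
    0 ≤ sigmaMin C := by
  by_cases hb : BddAbove {c | 0 ≤ c ∧ ∀ h, c * euclNorm h ≤ euclNorm (C.mulVec h)}
  · exact le_csSup hb (zero_mem_S' C)
  · rw [sigmaMin, Real.sSup_of_not_bddAbove hb]

lemma sigmaMin_le' {m n : Type*} [Fintype m] [Fintype n] (C : Matrix m n ℝ) (h : n → ℝ) :
    sigmaMin C * euclNorm h ≤ euclNorm (C.mulVec h) := by
  by_cases hb : BddAbove {c | 0 ≤ c ∧ ∀ h, c * euclNorm h ≤ euclNorm (C.mulVec h)}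
  · rcases eq_or_lt_of_le (euclNorm_nonneg' h) with h0 | h0
    · rw [← h0, mul_zero]; exact euclNorm_nonneg' _
    · rw [← le_div_iff₀ h0]
      refine csSup_le ⟨0, zero_mem_S' C⟩ fun c hc => ?_
      rw [le_div_iff₀ h0]; exact hc.2 h
  · rw [sigmaMin, Real.sSup_of_not_bddAbove hb, zero_mul]; exact euclNorm_nonneg' _

lemma euclNorm_transpose_ge' {n : Type*} [Fintype n] [DecidableEq n] (C : Matrix n n ℝ)
    {c : ℝ} (hc : 0 ≤ c) (hC : ∀ g, c * euclNorm g ≤ euclNorm (C.mulVec g)) (h : n → ℝ) :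
    c * euclNorm h ≤ euclNorm (Cᵀ.mulVec h) := by
  rcases eq_or_lt_of_le hc with rfl | hcpos
  · simpa using euclNorm_nonneg' (Cᵀ.mulVec h)
  rcases eq_or_lt_of_le (euclNorm_nonneg' h) with h0 | h0
  · rw [← h0, mul_zero]; exact euclNorm_nonneg' _
  have hinj : Function.Injective C.mulVecLin := by
    rw [← LinearMap.ker_eq_bot, LinearMap.ker_eq_bot']
    intro g hg
    have h1 := hC g
    have h2 : C.mulVec g = 0 := hg
    rw [h2] at h1
    have h3 : euclNorm (0 : n → ℝ) = 0 := by simp [euclNorm]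
    rw [h3] at h1
    have h4 : euclNorm g = 0 := le_antisymm (by nlinarith [euclNorm_nonneg' g]) (euclNorm_nonneg' g)
    exact euclNorm_eq_zero' h4
  have hsurj : Function.Surjective C.mulVecLin :=
    (LinearMap.injective_iff_surjective).mp hinj
  obtain ⟨g, hg⟩ := hsurj h
  have hg' : C.mulVec g = h := hg
  have key : euclNorm h ^ 2 ≤ euclNorm (Cᵀ.mulVec h) * euclNorm g := by
    calc euclNorm h ^ 2 = h ⬝ᵥ h := euclNorm_sq' h
    _ = h ⬝ᵥ C.mulVec g := by rw [hg']
    _ = (Cᵀ.mulVec h) ⬝ᵥ g := by rw [Matrix.dotProduct_mulVec, Matrix.mulVec_transpose]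
    _ ≤ euclNorm (Cᵀ.mulVec h) * euclNorm g := le_trans (le_abs_self _) (abs_dot_le' _ _)
  have hgle : euclNorm g ≤ euclNorm h / c := by
    rw [le_div_iff₀ hcpos, mul_comm]
    rw [← hg']; exact hC g
  have hle : euclNorm h ^ 2 ≤ euclNorm (Cᵀ.mulVec h) * (euclNorm h / c) :=
    le_trans key (mul_le_mul_of_nonneg_left hgle (euclNorm_nonneg' _))
  have h5 : (c * euclNorm h) * euclNorm h ≤ euclNorm (Cᵀ.mulVec h) * euclNorm h := by
    have h6 := mul_le_mul_of_nonneg_right hle hc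
    have h7 : euclNorm (Cᵀ.mulVec h) * (euclNorm h / c) * c = euclNorm (Cᵀ.mulVec h) * euclNorm h := by
      field_simp
    rw [h7] at h6
    nlinarith [h6]
  exact le_of_mul_le_mul_right h5 h0

lemma psd_helper' {α β γ : Type*} [Fintype α] [Fintype β] [Fintype γ]
    [DecidableEq α] [DecidableEq γ]
    (A : Matrix α β ℝ) (U : Matrix α γ ℝ) (V : Matrix β γ ℝ) (hU : Uᵀ * U = 1) :
    (Vᵀ * Aᵀ * A * V - (Uᵀ * A * V)ᵀ * (Uᵀ * A * V)).PosSemidef := by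
  have hU' : ∀ X : Matrix γ γ ℝ, Uᵀ * (U * X) = X := fun X => by
    rw [← Matrix.mul_assoc, hU, Matrix.one_mul]
  have key : (((1 : Matrix α α ℝ) - U * Uᵀ) * A * V)ᵀ * (((1 : Matrix α α ℝ) - U * Uᵀ) * A * V)
      = Vᵀ * Aᵀ * A * V - (Uᵀ * A * V)ᵀ * (Uᵀ * A * V) := by
    simp only [Matrix.transpose_mul, Matrix.transpose_sub, Matrix.transpose_one,
      Matrix.transpose_transpose, Matrix.mul_sub, Matrix.sub_mul, Matrix.mul_one,
      Matrix.one_mul, Matrix.mul_assoc, hU']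
    abel
  rw [← key]
  have := Matrix.posSemidef_conjTranspose_mul_self (((1 : Matrix α α ℝ) - U * Uᵀ) * A * V)
  simpa using this

theorem stmt11 (M N l : ℕ) (A : Matrix (Fin M) (Fin N) ℝ)
    (U : Matrix (Fin M) (Fin l) ℝ) (V : Matrix (Fin N) (Fin l) ℝ)
    (hU : Uᵀ * U = 1) (hV : Vᵀ * V = 1) :
    (Vᵀ * Aᵀ * A * V - (Uᵀ * A * V)ᵀ * (Uᵀ * A * V)).PosSemidef ∧
    (Uᵀ * A * Aᵀ * U - (Uᵀ * A * V) * (Uᵀ * A * V)ᵀ).PosSemidef ∧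
    ∀ h : Fin l → ℝ,
      sigmaMin (Uᵀ * A * V) ^ 2 * euclNorm h ^ 2 ≤ h ⬝ᵥ (Vᵀ * Aᵀ * A * V).mulVec h ∧
      sigmaMin (Uᵀ * A * V) ^ 2 * euclNorm h ^ 2 ≤ h ⬝ᵥ (Uᵀ * A * Aᵀ * U).mulVec h := by
  set C := Uᵀ * A * V with hC
  have psd1 : (Vᵀ * Aᵀ * A * V - Cᵀ * C).PosSemidef := psd_helper' A U V hU
  have psd2 : (Uᵀ * A * Aᵀ * U - C * Cᵀ).PosSemidef := by
    have h2 := psd_helper' Aᵀ V U hV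
    have e1 : Uᵀ * Aᵀᵀ * Aᵀ * U = Uᵀ * A * Aᵀ * U := by rw [Matrix.transpose_transpose]
    have e2 : (Vᵀ * Aᵀ * U)ᵀ * (Vᵀ * Aᵀ * U) = C * Cᵀ := by
      rw [hC]
      simp [Matrix.transpose_mul, Matrix.transpose_transpose, Matrix.mul_assoc]
    rw [e1, e2] at h2
    exact h2
  refine ⟨psd1, psd2, fun h => ?_⟩
  have hsig := sigmaMin_le' C
  have hsig0 := sigmaMin_nonneg' C
  have hmul0 : 0 ≤ sigmaMin C * euclNorm h := mul_nonneg hsig0 (euclNorm_nonneg' h)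
  have hsq : sigmaMin C ^ 2 * euclNorm h ^ 2 = (sigmaMin C * euclNorm h) ^ 2 := by ring
  constructor
  · have q1 : h ⬝ᵥ (Cᵀ * C).mulVec h ≤ h ⬝ᵥ (Vᵀ * Aᵀ * A * V).mulVec h := by
      have := psd1.dotProduct_mulVec_nonneg h
      simp only [star_trivial, Matrix.sub_mulVec, dotProduct_sub] at this
      linarith
    have q2 : (sigmaMin C * euclNorm h) ^ 2 ≤ euclNorm (C.mulVec h) ^ 2 :=
      pow_le_pow_left₀ hmul0 (hsig h) 2
    rw [hsq]
    calc (sigmaMin C * euclNorm h) ^ 2 ≤ euclNorm (C.mulVec h) ^ 2 := q2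
    _ = h ⬝ᵥ (Cᵀ * C).mulVec h := (dot_CtC' C h).symm
    _ ≤ _ := q1
  · have q1 : h ⬝ᵥ (C * Cᵀ).mulVec h ≤ h ⬝ᵥ (Uᵀ * A * Aᵀ * U).mulVec h := by
      have := psd2.dotProduct_mulVec_nonneg h
      simp only [star_trivial, Matrix.sub_mulVec, dotProduct_sub] at this
      linarith
    have htr := euclNorm_transpose_ge' C hsig0 hsig h
    have q2 : (sigmaMin C * euclNorm h) ^ 2 ≤ euclNorm (Cᵀ.mulVec h) ^ 2 :=
      pow_le_pow_left₀ hmul0 htr 2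
    have q3 : h ⬝ᵥ (C * Cᵀ).mulVec h = euclNorm (Cᵀ.mulVec h) ^ 2 := by
      have := dot_CtC' Cᵀ h
      rwa [Matrix.transpose_transpose] at this
    rw [hsq]
    calc (sigmaMin C * euclNorm h) ^ 2 ≤ euclNorm (Cᵀ.mulVec h) ^ 2 := q2
    _ = h ⬝ᵥ (C * Cᵀ).mulVec h := q3.symm
    _ ≤ _ := q1
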